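/- Suppose X and Y are nonnegative square-integrable random variables with E[X] ≤ δ and E[X ≥ ε] having probability at most δ/ε. Then E[(X − Y)²] ≥ E[Y²] − √(δ/ε)·√(E[Y⁴]) − 2ε√(E[Y²]). -/

import Mathlib

open MeasureTheory

/-- If `X, Y ≥ 0`, `E[X] ≤ δ` and `P(X ≥ ε) ≤ δ/ε`, then
`E[(X − Y)²] ≥ E[Y²] − √(δ/ε)·√(E[Y⁴]) − 2ε√(E[Y²])`. -/
theorem loss_lower_bound_near_dead_neuron {Ω : Type*} [MeasurableSpace Ω]
    (μ : Measure Ω) [IsProbabilityMeasure μ] (X Y : Ω → ℝ)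
    (hXmeas : Measurable X) (hYmeas : Measurable Y)
    (hXnonneg : ∀ ω, 0 ≤ X ω) (hYnonneg : ∀ ω, 0 ≤ Y ω)
    (hXint : Integrable X μ)
    (hY2 : Integrable (fun ω => Y ω ^ 2) μ)
    (hY4 : Integrable (fun ω => Y ω ^ 4) μ)
    (hXY2 : Integrable (fun ω => (X ω - Y ω) ^ 2) μ)
    (δ ε : ℝ) (hδ : 0 < δ) (hε : 0 < ε)
    (hmean : ∫ ω, X ω ∂μ ≤ δ)
    (htail : (μ {ω | ε ≤ X ω}).toReal ≤ δ / ε) :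
    (∫ ω, Y ω ^ 2 ∂μ) - Real.sqrt (δ / ε) * Real.sqrt (∫ ω, Y ω ^ 4 ∂μ)
        - 2 * ε * Real.sqrt (∫ ω, Y ω ^ 2 ∂μ) ≤
      ∫ ω, (X ω - Y ω) ^ 2 ∂μ := by
  set A : Set Ω := {ω | ε ≤ X ω} with hA
  have hAm : MeasurableSet A := measurableSet_le measurable_const hXmeas
  have hYsm : AEStronglyMeasurable Y μ := hYmeas.aestronglyMeasurable
  have hmem2 : MemLp Y 2 μ := (memLp_two_iff_integrable_sq hYsm).2 hY2
  have hYint : Integrable Y μ := hmem2.integrable one_le_two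
  have hY2nonneg : 0 ≤ ∫ ω, Y ω ^ 2 ∂μ := integral_nonneg fun ω => sq_nonneg _
  have hY4nonneg : 0 ≤ ∫ ω, Y ω ^ 4 ∂μ := integral_nonneg fun ω => by positivity
  -- ∫ Y ≤ sqrt (∫ Y²)
  have hEY : ∫ ω, Y ω ∂μ ≤ Real.sqrt (∫ ω, Y ω ^ 2 ∂μ) := by
    have hvar := ProbabilityTheory.variance_nonneg Y μ
    rw [ProbabilityTheory.variance_eq_sub hmem2] at hvar
    have h2 : (∫ ω, Y ω ∂μ) ^ 2 ≤ ∫ ω, Y ω ^ 2 ∂μ := by simpa using hvar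
    rcases le_or_gt (∫ ω, Y ω ∂μ) 0 with h | h
    · exact h.trans (Real.sqrt_nonneg _)
    · exact (Real.le_sqrt' h).mpr h2
  -- Cauchy–Schwarz: ∫_A Y² ≤ sqrt (δ/ε) * sqrt (∫ Y⁴)
  have hCS : ∫ ω in A, Y ω ^ 2 ∂μ ≤ Real.sqrt (δ / ε) * Real.sqrt (∫ ω, Y ω ^ 4 ∂μ) := by
    have hind : ∫ ω in A, Y ω ^ 2 ∂μ = ∫ ω, A.indicator (fun _ => (1 : ℝ)) ω * Y ω ^ 2 ∂μ := by
      rw [← integral_indicator hAm]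
      congr 1
      ext ω
      by_cases hω : ω ∈ A <;> simp [hω]
    have hmemInd : MemLp (A.indicator (fun _ => (1 : ℝ))) (ENNReal.ofReal 2) μ := by
      have : MemLp (A.indicator (fun _ => (1 : ℝ))) 2 μ :=
        (memLp_indicator_const 2 hAm (1 : ℝ) (Or.inr (measure_ne_top μ A)))
      simpa [ENNReal.ofReal_ofNat] using this
    have hmemY2 : MemLp (fun ω => Y ω ^ 2) (ENNReal.ofReal 2) μ := by
      have : MemLp (fun ω => Y ω ^ 2) 2 μ := by
        refine (memLp_two_iff_integrable_sq ?_).2 ?_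
        · exact (hYmeas.pow_const 2).aestronglyMeasurable
        · convert hY4 using 2 with ω
          ring
      simpa [ENNReal.ofReal_ofNat] using this
    have hconj : Real.HolderConjugate 2 2 := Real.holderConjugate_iff.mpr ⟨one_lt_two, by norm_num⟩
    have hH := integral_mul_le_Lp_mul_Lq_of_nonneg hconj
      (Filter.Eventually.of_forall fun ω => Set.indicator_nonneg (fun _ _ => zero_le_one) ω)
      (Filter.Eventually.of_forall fun ω => sq_nonneg (Y ω)) hmemInd hmemY2
    rw [hind]
    have h1 : ∫ ω, A.indicator (fun _ => (1 : ℝ)) ω ^ (2 : ℝ) ∂μ = (μ A).toReal := by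
      have : ∀ ω, A.indicator (fun _ => (1 : ℝ)) ω ^ (2 : ℝ) = A.indicator (fun _ => (1 : ℝ)) ω := by
        intro ω; by_cases hω : ω ∈ A <;> simp [hω]
      rw [integral_congr_ae (Filter.Eventually.of_forall this), integral_indicator hAm]
      simp [Measure.real]
    have h2 : ∫ ω, (Y ω ^ 2) ^ (2 : ℝ) ∂μ = ∫ ω, Y ω ^ 4 ∂μ := by
      congr 1; ext ω
      rw [show ((2:ℝ)) = ((2:ℕ):ℝ) by norm_num, Real.rpow_natCast]
      ring
    rw [h1, h2] at hH
    refine hH.trans ?_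
    rw [Real.sqrt_eq_rpow, Real.sqrt_eq_rpow]
    gcongr <;> first | exact ENNReal.toReal_nonneg | norm_num | exact htail
  -- restriction bounds
  have hμc : μ Aᶜ ≠ ⊤ := measure_ne_top μ Aᶜ
  have hf_int : Integrable (fun ω => Y ω ^ 2 - 2 * ε * Y ω) μ :=
    hY2.sub (hYint.const_mul (2 * ε))
  have hmono : ∫ ω in Aᶜ, (Y ω ^ 2 - 2 * ε * Y ω) ∂μ ≤ ∫ ω in Aᶜ, (X ω - Y ω) ^ 2 ∂μ := by
    refine setIntegral_mono_on hf_int.integrableOn hXY2.integrableOn hAm.compl ?_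
    intro ω hω
    have hXlt : X ω < ε := by
      simpa [hA] using hω
    nlinarith [hXnonneg ω, hYnonneg ω, sq_nonneg (X ω)]
  have hsplit : ∫ ω in Aᶜ, (Y ω ^ 2 - 2 * ε * Y ω) ∂μ
      = ∫ ω in Aᶜ, Y ω ^ 2 ∂μ - 2 * ε * ∫ ω in Aᶜ, Y ω ∂μ := by
    rw [integral_sub hY2.integrableOn ((hYint.const_mul (2 * ε)).integrableOn),
      integral_const_mul]
  have haddcompl : ∫ ω in A, Y ω ^ 2 ∂μ + ∫ ω in Aᶜ, Y ω ^ 2 ∂μ = ∫ ω, Y ω ^ 2 ∂μ :=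
    integral_add_compl hAm hY2
  have hYc : ∫ ω in Aᶜ, Y ω ∂μ ≤ Real.sqrt (∫ ω, Y ω ^ 2 ∂μ) := by
    refine le_trans ?_ hEY
    exact setIntegral_le_integral hYint (Filter.Eventually.of_forall hYnonneg)
  have hcompl : ∫ ω in Aᶜ, (X ω - Y ω) ^ 2 ∂μ ≤ ∫ ω, (X ω - Y ω) ^ 2 ∂μ :=
    setIntegral_le_integral hXY2 (Filter.Eventually.of_forall fun ω => sq_nonneg _)
  nlinarith [hε]
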